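/- For all natural numbers k and l, if 𝓗 is a collection of pairwise distinct sets with |𝓗| > (R(k+1)+R(l+1)−2 choose R(k+1)−1), where R denotes the diagonal Ramsey number, then at least one of the following holds: the (k+1)-singleton matrix can be found in 𝓗, or the (l+1)-cosingleton matrix can be found in 𝓗, or the min(k+1, l+1)-monotone matrix can be found in 𝓗. -/

import Mathlib

/-- A 0-1 matrix `N` (given as a `Prop`-valued matrix, `N i j` meaning entry 1)
with rows indexed by `Fin a` and columns by `Fin b` *can be found* in a collection
of sets `𝓗` if there are `a` distinct sets of `𝓗` and `b` distinct elements of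
`⋃₀ 𝓗` such that `N` is the incidence matrix of the sets over the elements. -/
def FoundIn {α : Type*} {a b : ℕ} (N : Fin a → Fin b → Prop) (𝓗 : Set (Set α)) : Prop :=
  ∃ (H : Fin a → Set α) (e : Fin b → α),
    Function.Injective H ∧ Function.Injective e ∧
    (∀ i, H i ∈ 𝓗) ∧ (∀ j, e j ∈ ⋃₀ 𝓗) ∧
    (∀ i j, e j ∈ H i ↔ N i j)

/-- The `n`-singleton matrix `Sⁿ`: `n+1` rows, `n` columns, entry 1 iff `i = j+1`. -/
def singletonMatrix (n : ℕ) : Fin (n + 1) → Fin n → Prop :=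
  fun i j => (i : ℕ) = (j : ℕ) + 1

/-- The `n`-cosingleton matrix `S̄ⁿ`: `n+1` rows, `n` columns, entry 0 iff `i = j`. -/
def cosingletonMatrix (n : ℕ) : Fin (n + 1) → Fin n → Prop :=
  fun i j => (i : ℕ) ≠ (j : ℕ)

/-- The `n`-monotone matrix `Mⁿ`: `n+1` rows, `n` columns, entry 1 iff `i ≥ j+1`. -/
def monotoneMatrix (n : ℕ) : Fin (n + 1) → Fin n → Prop :=
  fun i j => (j : ℕ) + 1 ≤ (i : ℕ)

/-- The diagonal Ramsey number `R(r)`: the least `n` such that every 2-coloring of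
the 2-element subsets of an `n`-element set admits a monochromatic subset of size `r`. -/
noncomputable def RamseyNumber (r : ℕ) : ℕ :=
  sInf {n : ℕ | ∀ c : Sym2 (Fin n) → Bool, ∃ (A : Finset (Fin n)) (b : Bool),
    r ≤ A.card ∧ ∀ i ∈ A, ∀ j ∈ A, i ≠ j → c s(i, j) = b}


lemma mono_insert {V : Type} [DecidableEq V] (c : V → V → Bool) (bb : Bool) (v : V) (A : Finset V)
    (hsymm : ∀ x y, c x y = c y x)
    (hvy : ∀ y ∈ A, c v y = bb)
    (hA : ∀ x ∈ A, ∀ y ∈ A, x ≠ y → c x y = bb) :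
    ∀ x ∈ insert v A, ∀ y ∈ insert v A, x ≠ y → c x y = bb := by
  intro x hx y hy hxy
  rcases Finset.mem_insert.mp hx with h | h <;> rcases Finset.mem_insert.mp hy with h' | h'
  · exact absurd (h.trans h'.symm) hxy
  · rw [h]; exact hvy y h'
  · rw [h', hsymm]; exact hvy x h
  · exact hA x h y h' hxy

lemma ramsey_aux : ∀ (t p q : ℕ), p + q ≤ t →
    ∃ n : ℕ, ∀ (V : Type) (s : Finset V) (c : V → V → Bool),
    n ≤ s.card → (∀ x y, c x y = c y x) →
    ∃ A : Finset V, A ⊆ s ∧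
      ((p ≤ A.card ∧ ∀ x ∈ A, ∀ y ∈ A, x ≠ y → c x y = false) ∨
       (q ≤ A.card ∧ ∀ x ∈ A, ∀ y ∈ A, x ≠ y → c x y = true)) := by
  intro t
  induction t with
  | zero =>
    intro p q hpq
    refine ⟨0, fun V s c _ _ => ⟨∅, Finset.empty_subset _, Or.inl ⟨by omega, by simp⟩⟩⟩
  | succ m ih =>
    intro p q hpq
    match p, q with
    | 0, q =>
      refine ⟨0, fun V s c _ _ => ⟨∅, Finset.empty_subset _, Or.inl ⟨by omega, by simp⟩⟩⟩
    | p+1, 0 =>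
      refine ⟨0, fun V s c _ _ => ⟨∅, Finset.empty_subset _, Or.inr ⟨by omega, by simp⟩⟩⟩
    | p+1, q+1 =>
      obtain ⟨n1, h1⟩ := ih p (q+1) (by omega)
      obtain ⟨n2, h2⟩ := ih (p+1) q (by omega)
      refine ⟨n1 + n2 + 1, fun V s c hcard hsymm => ?_⟩
      classical
      have hs : s.Nonempty := Finset.card_pos.mp (by omega)
      obtain ⟨v, hv⟩ := hs
      have hcard' : n1 + n2 ≤ (s.erase v).card := by
        rw [Finset.card_erase_of_mem hv]; omega
      set sf := (s.erase v).filter (fun y => c v y = false) with hsf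
      set st := (s.erase v).filter (fun y => ¬ (c v y = false)) with hst
      have hsplit : sf.card + st.card = (s.erase v).card :=
        Finset.card_filter_add_card_filter_not _
      have hsubf : sf ⊆ s := (Finset.filter_subset _ _).trans (Finset.erase_subset _ _)
      have hsubt : st ⊆ s := (Finset.filter_subset _ _).trans (Finset.erase_subset _ _)
      by_cases hc1 : n1 ≤ sf.card
      · obtain ⟨A, hAsub, hA⟩ := h1 V sf c hc1 hsymm
        have hvA : v ∉ A := fun hvA =>
          Finset.notMem_erase v s (Finset.filter_subset _ _ (hAsub hvA))
        rcases hA with ⟨hAc, hAmono⟩ | ⟨hAc, hAmono⟩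
        · refine ⟨insert v A, ?_, Or.inl ⟨?_, ?_⟩⟩
          · exact Finset.insert_subset hv (hAsub.trans hsubf)
          · rw [Finset.card_insert_of_notMem hvA]; omega
          · exact mono_insert c false v A hsymm
              (fun y hy => (Finset.mem_filter.mp (hAsub hy)).2) hAmono
        · exact ⟨A, hAsub.trans hsubf, Or.inr ⟨by omega, hAmono⟩⟩
      · have hc2 : n2 ≤ st.card := by omega
        obtain ⟨A, hAsub, hA⟩ := h2 V st c hc2 hsymm
        have hvA : v ∉ A := fun hvA =>
          Finset.notMem_erase v s (Finset.filter_subset _ _ (hAsub hvA))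
        rcases hA with ⟨hAc, hAmono⟩ | ⟨hAc, hAmono⟩
        · exact ⟨A, hAsub.trans hsubt, Or.inl ⟨by omega, hAmono⟩⟩
        · refine ⟨insert v A, ?_, Or.inr ⟨?_, ?_⟩⟩
          · exact Finset.insert_subset hv (hAsub.trans hsubt)
          · rw [Finset.card_insert_of_notMem hvA]; omega
          · refine mono_insert c true v A hsymm (fun y hy => ?_) hAmono
            have := (Finset.mem_filter.mp (hAsub hy)).2
            simpa using this

lemma ramsey_set_nonempty (r : ℕ) :
    {n : ℕ | ∀ c : Sym2 (Fin n) → Bool, ∃ (A : Finset (Fin n)) (b : Bool),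
      r ≤ A.card ∧ ∀ i ∈ A, ∀ j ∈ A, i ≠ j → c s(i, j) = b}.Nonempty := by
  obtain ⟨n, hn⟩ := ramsey_aux (r + r) r r le_rfl
  refine ⟨n, fun c => ?_⟩
  have hsymm : ∀ x y : Fin n, c s(x, y) = c s(y, x) := fun x y => by rw [Sym2.eq_swap]
  obtain ⟨A, -, hA⟩ := hn (Fin n) Finset.univ (fun x y => c s(x, y))
    (by simp) hsymm
  rcases hA with ⟨hc, hm⟩ | ⟨hc, hm⟩
  · exact ⟨A, false, hc, hm⟩
  · exact ⟨A, true, hc, hm⟩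

lemma ramseyNumber_prop (r : ℕ) :
    ∀ c : Sym2 (Fin (RamseyNumber r)) → Bool, ∃ (A : Finset (Fin (RamseyNumber r))) (b : Bool),
      r ≤ A.card ∧ ∀ i ∈ A, ∀ j ∈ A, i ≠ j → c s(i, j) = b :=
  Nat.sInf_mem (ramsey_set_nonempty r)

lemma ramseyNumber_pos (r : ℕ) : 0 < RamseyNumber (r + 1) := by
  rcases Nat.eq_zero_or_pos (RamseyNumber (r + 1)) with h | h
  · exfalso
    obtain ⟨A, b, hc, -⟩ := ramseyNumber_prop (r + 1) (fun _ => false)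
    have : A.card ≤ 0 := by
      have := Finset.card_le_card (Finset.subset_univ A)
      simpa [h] using this
    omega
  · exact h

section Chains
variable {α : Type*}

def UpChain (n : ℕ) (F : Finset (Set α)) : Prop :=
  ∃ (H : Fin (n+1) → Set α) (e : Fin n → α),
    (∀ i, H i ∈ F) ∧ (∀ j : Fin n, e j ∉ H j.castSucc) ∧
    (∀ (j : Fin n) (i : Fin (n+1)), j.castSucc < i → e j ∈ H i)

def DownChain (n : ℕ) (F : Finset (Set α)) : Prop :=
  ∃ (H : Fin (n+1) → Set α) (e : Fin n → α),
    (∀ i, H i ∈ F) ∧ (∀ j : Fin n, e j ∈ H j.castSucc) ∧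
    (∀ (j : Fin n) (i : Fin (n+1)), j.castSucc < i → e j ∉ H i)

lemma UpChain.mono {n : ℕ} {F F' : Finset (Set α)} (h : UpChain n F) (hFF : F ⊆ F') :
    UpChain n F' := by
  obtain ⟨H, e, h1, h2, h3⟩ := h
  exact ⟨H, e, fun i => hFF (h1 i), h2, h3⟩

lemma DownChain.mono {n : ℕ} {F F' : Finset (Set α)} (h : DownChain n F) (hFF : F ⊆ F') :
    DownChain n F' := by
  obtain ⟨H, e, h1, h2, h3⟩ := h
  exact ⟨H, e, fun i => hFF (h1 i), h2, h3⟩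

lemma UpChain.cons {n : ℕ} {F F1 : Finset (Set α)} (h : UpChain n F1)
    (B : Set α) (x : α) (hxB : x ∉ B) (hx : ∀ S ∈ F1, x ∈ S)
    (hB : B ∈ F) (hF1 : F1 ⊆ F) :
    UpChain (n+1) F := by
  obtain ⟨H, e, h1, h2, h3⟩ := h
  refine ⟨Fin.cases B H, Fin.cases x e, ?_, ?_, ?_⟩
  · intro i
    rcases Fin.eq_zero_or_eq_succ i with rfl | ⟨i0, rfl⟩
    · simpa using hB
    · simpa using hF1 (h1 i0)
  · intro j
    rcases Fin.eq_zero_or_eq_succ j with rfl | ⟨j0, rfl⟩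
    · simpa using hxB
    · rw [← Fin.succ_castSucc]
      simpa using h2 j0
  · intro j i hji
    rcases Fin.eq_zero_or_eq_succ j with rfl | ⟨j0, rfl⟩
    · rcases Fin.eq_zero_or_eq_succ i with rfl | ⟨i0, rfl⟩
      · simp at hji
      · simpa using hx _ (h1 i0)
    · rcases Fin.eq_zero_or_eq_succ i with rfl | ⟨i0, rfl⟩
      · exact absurd hji (Fin.not_lt_zero _)
      · rw [← Fin.succ_castSucc] at hji
        simpa using h3 j0 i0 (by exact_mod_cast Fin.succ_lt_succ_iff.mp hji)

lemma DownChain.cons {n : ℕ} {F F0 : Finset (Set α)} (h : DownChain n F0)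
    (B : Set α) (x : α) (hxB : x ∈ B) (hx : ∀ S ∈ F0, x ∉ S)
    (hB : B ∈ F) (hF0 : F0 ⊆ F) :
    DownChain (n+1) F := by
  obtain ⟨H, e, h1, h2, h3⟩ := h
  refine ⟨Fin.cases B H, Fin.cases x e, ?_, ?_, ?_⟩
  · intro i
    rcases Fin.eq_zero_or_eq_succ i with rfl | ⟨i0, rfl⟩
    · simpa using hB
    · simpa using hF0 (h1 i0)
  · intro j
    rcases Fin.eq_zero_or_eq_succ j with rfl | ⟨j0, rfl⟩
    · simpa using hxB
    · rw [← Fin.succ_castSucc]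
      simpa using h2 j0
  · intro j i hji
    rcases Fin.eq_zero_or_eq_succ j with rfl | ⟨j0, rfl⟩
    · rcases Fin.eq_zero_or_eq_succ i with rfl | ⟨i0, rfl⟩
      · simp at hji
      · simpa using hx _ (h1 i0)
    · rcases Fin.eq_zero_or_eq_succ i with rfl | ⟨i0, rfl⟩
      · exact absurd hji (Fin.not_lt_zero _)
      · rw [← Fin.succ_castSucc] at hji
        simpa using h3 j0 i0 (by exact_mod_cast Fin.succ_lt_succ_iff.mp hji)

end Chains

section ChainLemma
variable {α : Type*}

lemma exists_sep {F : Finset (Set α)} (h : 2 ≤ F.card) :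
    ∃ A ∈ F, ∃ B ∈ F, ∃ x, x ∈ B ∧ x ∉ A := by
  obtain ⟨A, hA, B, hB, hne⟩ := Finset.one_lt_card.mp h
  have : ¬ ∀ x, x ∈ A ↔ x ∈ B := fun hh => hne (Set.ext hh)
  obtain ⟨x, hx⟩ := not_forall.mp this
  by_cases hxA : x ∈ A
  · exact ⟨B, hB, A, hA, x, hxA, fun hxB => hx ⟨fun _ => hxB, fun _ => hxA⟩⟩
  · exact ⟨A, hA, B, hB, x, by tauto, hxA⟩

lemma upChain_one {F : Finset (Set α)} (h : 2 ≤ F.card) : UpChain 1 F := by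
  obtain ⟨A, hA, B, hB, x, hxB, hxA⟩ := exists_sep h
  classical
  refine ⟨fun i => if i = 0 then A else B, fun _ => x, ?_, ?_, ?_⟩
  · intro i; dsimp only; split <;> assumption
  · intro j
    have : j.castSucc = 0 := by
      have : j = 0 := Subsingleton.elim _ _
      simp [this]
    simpa [this] using hxA
  · intro j i hji
    have hi : i ≠ 0 := by
      intro hi0
      rw [hi0] at hji
      exact absurd hji (Fin.not_lt_zero _)
    simpa [hi] using hxB

lemma downChain_one {F : Finset (Set α)} (h : 2 ≤ F.card) : DownChain 1 F := by
  obtain ⟨A, hA, B, hB, x, hxB, hxA⟩ := exists_sep h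
  classical
  refine ⟨fun i => if i = 0 then B else A, fun _ => x, ?_, ?_, ?_⟩
  · intro i; dsimp only; split <;> assumption
  · intro j
    have : j.castSucc = 0 := by
      have : j = 0 := Subsingleton.elim _ _
      simp [this]
    simpa [this] using hxB
  · intro j i hji
    have hi : i ≠ 0 := by
      intro hi0
      rw [hi0] at hji
      exact absurd hji (Fin.not_lt_zero _)
    simpa [hi] using hxA

lemma chain_lemma : ∀ (t u d : ℕ) (F : Finset (Set α)), u + d ≤ t →
    (u + d).choose u < F.card → UpChain (u+1) F ∨ DownChain (d+1) F := by
  intro t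
  induction t with
  | zero =>
    intro u d F hud hF
    have hu : u = 0 := by omega
    subst hu
    have : 2 ≤ F.card := by simp at hF; omega
    exact Or.inl (upChain_one this)
  | succ m ih =>
    intro u d F hud hF
    match u, d with
    | 0, d =>
      have : 2 ≤ F.card := by simp at hF; omega
      exact Or.inl (upChain_one this)
    | u+1, 0 =>
      have : 2 ≤ F.card := by
        have : (u + 1 + 0).choose (u+1) = 1 := by simp
        omega
      exact Or.inr (downChain_one this)
    | u+1, d+1 =>
      classical
      have h2 : 2 ≤ F.card := by
        have : 0 < (u + 1 + (d + 1)).choose (u+1) := Nat.choose_pos (by omega)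
        omega
      obtain ⟨A, hA, B, hB, x, hxB, hxA⟩ := exists_sep h2
      set F1 := F.filter (fun S => x ∈ S) with hF1
      set F0 := F.filter (fun S => ¬ (x ∈ S)) with hF0
      have hsplit : F1.card + F0.card = F.card :=
        Finset.card_filter_add_card_filter_not _
      have hBmem : B ∈ F1 := Finset.mem_filter.mpr ⟨hB, hxB⟩
      have hAmem : A ∈ F0 := Finset.mem_filter.mpr ⟨hA, hxA⟩
      have hchoose : (u + 1 + (d + 1)).choose (u+1)
          = (u + d + 1).choose u + (u + d + 1).choose (u+1) := by
        have := Nat.choose_succ_succ (u + d + 1) u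
        convert this using 2 <;> omega
      by_cases hc1 : (u + (d+1)).choose u < F1.card
      · rcases ih u (d+1) F1 (by omega) hc1 with hup | hdown
        · left
          exact hup.cons A x hxA (fun S hS => (Finset.mem_filter.mp hS).2) hA
            (Finset.filter_subset _ _)
        · exact Or.inr (hdown.mono (Finset.filter_subset _ _))
      · have hc0 : (u + 1 + d).choose (u+1) < F0.card := by
          have e1 : u + (d+1) = u + d + 1 := by omega
          have e2 : u + 1 + d = u + d + 1 := by omega
          rw [e1] at hc1
          rw [e2]
          omega
        rcases ih (u+1) d F0 (by omega) hc0 with hup | hdown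
        · exact Or.inl (hup.mono (Finset.filter_subset _ _))
        · right
          exact hdown.cons B x hxB (fun S hS => (Finset.mem_filter.mp hS).2) hB
            (Finset.filter_subset _ _)

end ChainLemma

section FoundInHelpers
variable {α : Type*}

lemma foundIn_mk {a b : ℕ} (N : Fin a → Fin b → Prop) (𝓗 : Set (Set α))
    (H : Fin a → Set α) (e : Fin b → α)
    (hmem : ∀ i, H i ∈ 𝓗) (hiff : ∀ i j, e j ∈ H i ↔ N i j)
    (hrow : ∀ i i', i ≠ i' → ∃ j, ¬ (N i j ↔ N i' j))
    (hcolex : ∀ j, ∃ i, N i j)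
    (hcol : ∀ j j', j ≠ j' → ∃ i, ¬ (N i j ↔ N i j')) :
    FoundIn N 𝓗 := by
  refine ⟨H, e, ?_, ?_, hmem, ?_, hiff⟩
  · intro i i' hii
    by_contra hne
    obtain ⟨j, hj⟩ := hrow i i' hne
    exact hj (by rw [← hiff, ← hiff, hii])
  · intro j j' hjj
    by_contra hne
    obtain ⟨i, hi⟩ := hcol j j' hne
    exact hi (by rw [← hiff, ← hiff, hjj])
  · intro j
    obtain ⟨i, hi⟩ := hcolex j
    exact ⟨H i, hmem i, (hiff i j).mpr hi⟩

lemma monotone_hrow (m : ℕ) : ∀ i i' : Fin (m+2), i ≠ i' →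
    ∃ j : Fin (m+1), ¬ (monotoneMatrix (m+1) i j ↔ monotoneMatrix (m+1) i' j) := by
  intro i i' h
  have hv : (i:ℕ) ≠ (i':ℕ) := fun hh => h (Fin.ext hh)
  have h1 := i.isLt; have h2 := i'.isLt
  rcases lt_or_gt_of_ne hv with hlt | hlt
  · exact ⟨⟨(i':ℕ) - 1, by omega⟩, by simp only [monotoneMatrix, Fin.val_mk, true_iff, iff_true, false_iff, iff_false]; omega⟩
  · exact ⟨⟨(i:ℕ) - 1, by omega⟩, by simp only [monotoneMatrix, Fin.val_mk, true_iff, iff_true, false_iff, iff_false]; omega⟩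

lemma monotone_hcolex (m : ℕ) : ∀ j : Fin (m+1), ∃ i : Fin (m+2), monotoneMatrix (m+1) i j := by
  intro j
  have := j.isLt
  exact ⟨Fin.last (m+1), by simp only [monotoneMatrix, Fin.val_last]; omega⟩

lemma monotone_hcol (m : ℕ) : ∀ j j' : Fin (m+1), j ≠ j' →
    ∃ i : Fin (m+2), ¬ (monotoneMatrix (m+1) i j ↔ monotoneMatrix (m+1) i j') := by
  intro j j' h
  have hv : (j:ℕ) ≠ (j':ℕ) := fun hh => h (Fin.ext hh)
  have h1 := j.isLt; have h2 := j'.isLt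
  rcases lt_or_gt_of_ne hv with hlt | hlt
  · exact ⟨⟨(j':ℕ), by omega⟩, by simp only [monotoneMatrix, Fin.val_mk, true_iff, iff_true, false_iff, iff_false]; omega⟩
  · exact ⟨⟨(j:ℕ), by omega⟩, by simp only [monotoneMatrix, Fin.val_mk, true_iff, iff_true, false_iff, iff_false]; omega⟩

lemma cosingleton_hrow (m : ℕ) : ∀ i i' : Fin (m+2), i ≠ i' →
    ∃ j : Fin (m+1), ¬ (cosingletonMatrix (m+1) i j ↔ cosingletonMatrix (m+1) i' j) := by
  intro i i' h
  have hv : (i:ℕ) ≠ (i':ℕ) := fun hh => h (Fin.ext hh)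
  have h1 := i.isLt; have h2 := i'.isLt
  by_cases hc : (i:ℕ) < m+1
  · exact ⟨⟨(i:ℕ), hc⟩, by simp only [cosingletonMatrix, Fin.val_mk, true_iff, iff_true, false_iff, iff_false]; omega⟩
  · exact ⟨⟨(i':ℕ), by omega⟩, by simp only [cosingletonMatrix, Fin.val_mk, true_iff, iff_true, false_iff, iff_false]; omega⟩

lemma cosingleton_hcolex (m : ℕ) : ∀ j : Fin (m+1), ∃ i : Fin (m+2),
    cosingletonMatrix (m+1) i j := by
  intro j
  have := j.isLt
  exact ⟨Fin.last (m+1), by simp only [cosingletonMatrix, Fin.val_last]; omega⟩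

lemma cosingleton_hcol (m : ℕ) : ∀ j j' : Fin (m+1), j ≠ j' →
    ∃ i : Fin (m+2), ¬ (cosingletonMatrix (m+1) i j ↔ cosingletonMatrix (m+1) i j') := by
  intro j j' h
  have hv : (j:ℕ) ≠ (j':ℕ) := fun hh => h (Fin.ext hh)
  have h1 := j.isLt; have h2 := j'.isLt
  exact ⟨⟨(j:ℕ), by omega⟩, by simp only [cosingletonMatrix, Fin.val_mk, true_iff, iff_true, false_iff, iff_false]; omega⟩

lemma singleton_hrow (m : ℕ) : ∀ i i' : Fin (m+2), i ≠ i' →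
    ∃ j : Fin (m+1), ¬ (singletonMatrix (m+1) i j ↔ singletonMatrix (m+1) i' j) := by
  intro i i' h
  have hv : (i:ℕ) ≠ (i':ℕ) := fun hh => h (Fin.ext hh)
  have h1 := i.isLt; have h2 := i'.isLt
  by_cases hc : 1 ≤ (i:ℕ)
  · exact ⟨⟨(i:ℕ) - 1, by omega⟩, by simp only [singletonMatrix, Fin.val_mk, true_iff, iff_true, false_iff, iff_false]; omega⟩
  · exact ⟨⟨(i':ℕ) - 1, by omega⟩, by simp only [singletonMatrix, Fin.val_mk, true_iff, iff_true, false_iff, iff_false]; omega⟩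

lemma singleton_hcolex (m : ℕ) : ∀ j : Fin (m+1), ∃ i : Fin (m+2),
    singletonMatrix (m+1) i j := by
  intro j
  have := j.isLt
  exact ⟨⟨(j:ℕ) + 1, by omega⟩, by simp only [singletonMatrix]⟩

lemma singleton_hcol (m : ℕ) : ∀ j j' : Fin (m+1), j ≠ j' →
    ∃ i : Fin (m+2), ¬ (singletonMatrix (m+1) i j ↔ singletonMatrix (m+1) i j') := by
  intro j j' h
  have hv : (j:ℕ) ≠ (j':ℕ) := fun hh => h (Fin.ext hh)
  have h1 := j.isLt; have h2 := j'.isLt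
  exact ⟨⟨(j:ℕ) + 1, by omega⟩, by simp only [singletonMatrix, Fin.val_mk, true_iff, iff_true, false_iff, iff_false]; omega⟩

lemma foundIn_monotone_mono {m n : ℕ} (h : m ≤ n) {𝓗 : Set (Set α)}
    (hf : FoundIn (monotoneMatrix n) 𝓗) : FoundIn (monotoneMatrix m) 𝓗 := by
  obtain ⟨H, e, hHinj, heinj, hmem, hun, hiff⟩ := hf
  have hm1 : m + 1 ≤ n + 1 := by omega
  refine ⟨fun i => H (Fin.castLE hm1 i), fun j => e (Fin.castLE h j),
    hHinj.comp (Fin.castLE_injective _), heinj.comp (Fin.castLE_injective _),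
    fun i => hmem _, fun j => hun _, ?_⟩
  intro i j
  rw [hiff]
  simp only [monotoneMatrix, Fin.coe_castLE]

end FoundInHelpers

section Extract
variable {α : Type*}

lemma up_extract (l : ℕ) (𝓗 : Finset (Set α))
    (hch : UpChain (RamseyNumber (l+1)) 𝓗) :
    FoundIn (cosingletonMatrix (l+1)) (↑𝓗 : Set (Set α)) ∨
    FoundIn (monotoneMatrix (l+1)) (↑𝓗 : Set (Set α)) := by
  classical
  obtain ⟨H, e, hmem, hnot, hin⟩ := hch
  obtain ⟨A, bb, hcard, hmono⟩ := ramseyNumber_prop (l+1)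
    (Sym2.lift ⟨fun p q => decide (e (max p q) ∈ H (min p q).castSucc),
      fun p q => by dsimp only; rw [sup_comm p q, inf_comm p q]⟩)
  obtain ⟨A', hA'sub, hA'card⟩ := Finset.exists_subset_card_eq (s := A) (n := l+1) hcard
  set σ := A'.orderEmbOfFin hA'card with hσdef
  have hσmem : ∀ i, (σ i) ∈ A := fun i => hA'sub (Finset.orderEmbOfFin_mem A' hA'card i)
  have hσmono : StrictMono σ := σ.strictMono
  have key : ∀ a b2 : Fin (l+1), a < b2 →
      (e (σ b2) ∈ H (σ a).castSucc ↔ bb = true) := by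
    intro a b2 hab
    have hlt : σ a < σ b2 := hσmono hab
    have h1 := hmono _ (hσmem a) _ (hσmem b2) (ne_of_lt hlt)
    simp only [Sym2.lift_mk] at h1
    rw [sup_eq_right.mpr hlt.le, inf_eq_left.mpr hlt.le] at h1
    rw [← h1, decide_eq_true_iff]
  have hchain : ∀ a b2 : Fin (l+1), b2 < a → e (σ b2) ∈ H (σ a).castSucc :=
    fun a b2 hba => hin (σ b2) (σ a).castSucc (Fin.castSucc_lt_castSucc_iff.mpr (hσmono hba))
  have hlast : ∀ b2 : Fin (l+1), e (σ b2) ∈ H (Fin.last _) :=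
    fun b2 => hin (σ b2) (Fin.last _) (Fin.castSucc_lt_last _)
  set G : Fin (l+2) → Set α :=
    fun i => if h : (i : ℕ) < l + 1 then H (σ ⟨i, h⟩).castSucc else H (Fin.last _) with hGdef
  set x : Fin (l+1) → α := fun j => e (σ j) with hxdef
  have hGmem : ∀ i, G i ∈ (↑𝓗 : Set (Set α)) := by
    intro i
    simp only [hGdef]
    split <;> exact hmem _
  cases bb
  · -- all later-in-earlier memberships false : monotone matrix
    right
    refine foundIn_mk _ _ G x hGmem ?_ (monotone_hrow l) (monotone_hcolex l) (monotone_hcol l)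
    intro i j
    have hil := i.isLt
    have hjl := j.isLt
    simp only [hGdef, hxdef, monotoneMatrix]
    split
    case isTrue h =>
      rcases lt_trichotomy (⟨(i:ℕ), h⟩ : Fin (l+1)) j with hlt | heq | hgt
      · have hnm : e (σ j) ∉ H (σ ⟨(i:ℕ), h⟩).castSucc := by simpa using key _ _ hlt
        have hv : (i:ℕ) < (j:ℕ) := Fin.lt_def.mp hlt
        exact iff_of_false hnm (by omega)
      · rw [heq]
        have hv : (i:ℕ) = (j:ℕ) := by simpa using congrArg Fin.val heq
        exact iff_of_false (hnot (σ j)) (by omega)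
      · have hv : (j:ℕ) < (i:ℕ) := Fin.lt_def.mp hgt
        exact iff_of_true (hchain _ _ hgt) (by omega)
    case isFalse h =>
      exact iff_of_true (hlast j) (by omega)
  · -- all later-in-earlier memberships true : cosingleton matrix
    left
    refine foundIn_mk _ _ G x hGmem ?_ (cosingleton_hrow l) (cosingleton_hcolex l)
      (cosingleton_hcol l)
    intro i j
    have hil := i.isLt
    have hjl := j.isLt
    simp only [hGdef, hxdef, cosingletonMatrix]
    split
    case isTrue h =>
      rcases lt_trichotomy (⟨(i:ℕ), h⟩ : Fin (l+1)) j with hlt | heq | hgt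
      · have hm : e (σ j) ∈ H (σ ⟨(i:ℕ), h⟩).castSucc := by simpa using key _ _ hlt
        have hv : (i:ℕ) < (j:ℕ) := Fin.lt_def.mp hlt
        exact iff_of_true hm (by omega)
      · rw [heq]
        have hv : (i:ℕ) = (j:ℕ) := by simpa using congrArg Fin.val heq
        exact iff_of_false (hnot (σ j)) (by omega)
      · have hv : (j:ℕ) < (i:ℕ) := Fin.lt_def.mp hgt
        exact iff_of_true (hchain _ _ hgt) (by omega)
    case isFalse h =>
      exact iff_of_true (hlast j) (by omega)

lemma down_extract (k : ℕ) (𝓗 : Finset (Set α))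
    (hch : DownChain (RamseyNumber (k+1)) 𝓗) :
    FoundIn (singletonMatrix (k+1)) (↑𝓗 : Set (Set α)) ∨
    FoundIn (monotoneMatrix (k+1)) (↑𝓗 : Set (Set α)) := by
  classical
  obtain ⟨H, e, hmem, hself, hnin⟩ := hch
  obtain ⟨A, bb, hcard, hmono⟩ := ramseyNumber_prop (k+1)
    (Sym2.lift ⟨fun p q => decide (e (max p q) ∈ H (min p q).castSucc),
      fun p q => by dsimp only; rw [sup_comm p q, inf_comm p q]⟩)
  obtain ⟨A', hA'sub, hA'card⟩ := Finset.exists_subset_card_eq (s := A) (n := k+1) hcard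
  set σ := A'.orderEmbOfFin hA'card with hσdef
  have hσmem : ∀ i, (σ i) ∈ A := fun i => hA'sub (Finset.orderEmbOfFin_mem A' hA'card i)
  have hσmono : StrictMono σ := σ.strictMono
  have key : ∀ a b2 : Fin (k+1), a < b2 →
      (e (σ b2) ∈ H (σ a).castSucc ↔ bb = true) := by
    intro a b2 hab
    have hlt : σ a < σ b2 := hσmono hab
    have h1 := hmono _ (hσmem a) _ (hσmem b2) (ne_of_lt hlt)
    simp only [Sym2.lift_mk] at h1
    rw [sup_eq_right.mpr hlt.le, inf_eq_left.mpr hlt.le] at h1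
    rw [← h1, decide_eq_true_iff]
  have hchain : ∀ a b2 : Fin (k+1), b2 < a → e (σ b2) ∉ H (σ a).castSucc :=
    fun a b2 hba => hnin (σ b2) (σ a).castSucc (Fin.castSucc_lt_castSucc_iff.mpr (hσmono hba))
  have hlast : ∀ b2 : Fin (k+1), e (σ b2) ∉ H (Fin.last _) :=
    fun b2 => hnin (σ b2) (Fin.last _) (Fin.castSucc_lt_last _)
  cases bb
  · -- singleton matrix
    left
    set G : Fin (k+2) → Set α :=
      fun i => if h : 1 ≤ (i : ℕ) then
          H (σ ⟨(i:ℕ) - 1, by have := i.isLt; omega⟩).castSucc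
        else H (Fin.last _) with hGdef
    set x : Fin (k+1) → α := fun j => e (σ j) with hxdef
    have hGmem : ∀ i, G i ∈ (↑𝓗 : Set (Set α)) := by
      intro i
      simp only [hGdef]
      split <;> exact hmem _
    refine foundIn_mk _ _ G x hGmem ?_ (singleton_hrow k) (singleton_hcolex k)
      (singleton_hcol k)
    intro i j
    have hil := i.isLt
    have hjl := j.isLt
    simp only [hGdef, hxdef, singletonMatrix]
    split
    case isTrue h =>
      rcases lt_trichotomy (⟨(i:ℕ) - 1, by omega⟩ : Fin (k+1)) j with hlt | heq | hgt
      · have hnm := by simpa using key _ _ hlt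
        have hv : (i:ℕ) - 1 < (j:ℕ) := Fin.lt_def.mp hlt
        exact iff_of_false hnm (by omega)
      · rw [heq]
        have hv : (i:ℕ) - 1 = (j:ℕ) := by simpa using congrArg Fin.val heq
        exact iff_of_true (hself (σ j)) (by omega)
      · have hv : (j:ℕ) < (i:ℕ) - 1 := Fin.lt_def.mp hgt
        exact iff_of_false (hchain _ _ hgt) (by omega)
    case isFalse h =>
      exact iff_of_false (hlast j) (by omega)
  · -- monotone matrix (reversed)
    right
    set G : Fin (k+2) → Set α :=
      fun i => if h : 1 ≤ (i : ℕ) then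
          H (σ ⟨k + 1 - (i:ℕ), by omega⟩).castSucc
        else H (Fin.last _) with hGdef
    set x : Fin (k+1) → α :=
      fun j => e (σ ⟨k - (j:ℕ), by omega⟩) with hxdef
    have hGmem : ∀ i, G i ∈ (↑𝓗 : Set (Set α)) := by
      intro i
      simp only [hGdef]
      split <;> exact hmem _
    refine foundIn_mk _ _ G x hGmem ?_ (monotone_hrow k) (monotone_hcolex k)
      (monotone_hcol k)
    intro i j
    have hil := i.isLt
    have hjl := j.isLt
    simp only [hGdef, hxdef, monotoneMatrix]
    split
    case isTrue h =>
      rcases lt_trichotomy (⟨k + 1 - (i:ℕ), by omega⟩ : Fin (k+1))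
        (⟨k - (j:ℕ), by omega⟩ : Fin (k+1)) with hlt | heq | hgt
      · have hm := by simpa using key _ _ hlt
        have hv : k + 1 - (i:ℕ) < k - (j:ℕ) := by simpa using hlt
        exact iff_of_true hm (by omega)
      · rw [heq]
        have hv : k + 1 - (i:ℕ) = k - (j:ℕ) := by simpa using congrArg Fin.val heq
        exact iff_of_true (hself _) (by omega)
      · have hv : k - (j:ℕ) < k + 1 - (i:ℕ) := by simpa using hgt
        exact iff_of_false (hchain _ _ hgt) (by omega)
    case isFalse h =>
      exact iff_of_false (hlast _) (by omega)

end Extract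

/-- **Theorem 2.** Any collection of more than
`(R(k+1)+R(l+1)-2).choose (R(k+1)-1)` pairwise distinct sets contains the
`(k+1)`-singleton matrix, the `(l+1)`-cosingleton matrix, or the
`min (k+1) (l+1)`-monotone matrix. -/
theorem singleton_or_cosingleton_or_monotone {α : Type*} (k l : ℕ) (𝓗 : Finset (Set α))
    (h : 𝓗.card >
      (RamseyNumber (k + 1) + RamseyNumber (l + 1) - 2).choose (RamseyNumber (k + 1) - 1)) :
    FoundIn (singletonMatrix (k + 1)) (↑𝓗 : Set (Set α)) ∨
    FoundIn (cosingletonMatrix (l + 1)) (↑𝓗 : Set (Set α)) ∨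
    FoundIn (monotoneMatrix (min (k + 1) (l + 1))) (↑𝓗 : Set (Set α)) := by

  classical
  have hrkpos : 0 < RamseyNumber (k + 1) := ramseyNumber_pos k
  have hrlpos : 0 < RamseyNumber (l + 1) := ramseyNumber_pos l
  have hbound : ((RamseyNumber (l + 1) - 1) + (RamseyNumber (k + 1) - 1)).choose
      (RamseyNumber (l + 1) - 1) < 𝓗.card := by
    have h1 : (RamseyNumber (l + 1) - 1) + (RamseyNumber (k + 1) - 1)
        = RamseyNumber (k + 1) + RamseyNumber (l + 1) - 2 := by omega
    have h2 : RamseyNumber (k + 1) + RamseyNumber (l + 1) - 2 - (RamseyNumber (k + 1) - 1)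
        = RamseyNumber (l + 1) - 1 := by omega
    rw [h1, ← h2, Nat.choose_symm (by omega)]
    exact h
  rcases chain_lemma ((RamseyNumber (l + 1) - 1) + (RamseyNumber (k + 1) - 1))
      (RamseyNumber (l + 1) - 1) (RamseyNumber (k + 1) - 1) 𝓗 le_rfl hbound with hup | hdown
  · have hch : UpChain (RamseyNumber (l + 1)) 𝓗 := by
      rwa [show RamseyNumber (l + 1) - 1 + 1 = RamseyNumber (l + 1) from by omega] at hup
    rcases up_extract l 𝓗 hch with hc | hm
    · exact Or.inr (Or.inl hc)
    · exact Or.inr (Or.inr (foundIn_monotone_mono (by omega) hm))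
  · have hch : DownChain (RamseyNumber (k + 1)) 𝓗 := by
      rwa [show RamseyNumber (k + 1) - 1 + 1 = RamseyNumber (k + 1) from by omega] at hdown
    rcases down_extract k 𝓗 hch with hs | hm
    · exact Or.inl hs
    · exact Or.inr (Or.inr (foundIn_monotone_mono (by omega) hm))
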